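/- Fix symmetric matrices M, H ∈ R^{(n+r)×(n+r)} with H partitioned as [[H11,H12],[H12^T,H22]], H11 ∈ R^{n×n}. Define S_H = { Z ∈ R^{r×n} : [I;Z]^T H [I;Z] ⪰ 0 }. If H22 ≺ 0 and S_H ≠ ∅, then ([I;Z]^T M [I;Z] ≻ 0 for all Z ∈ S_H) if and only if there exists a scalar α ≥ 0 with M - αH ≻ 0. (Matrix S-lemma.) -/

import Mathlib

open Matrix

namespace SLaux

variable {d : Type*} [Fintype d]

/-- quadratic form of a matrix -/
def qf (A : Matrix d d ℝ) (ξ : d → ℝ) : ℝ := ξ ⬝ᵥ (A *ᵥ ξ)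

lemma bilin_symm {A : Matrix d d ℝ} (hA : Aᵀ = A) (ξ η : d → ℝ) :
    ξ ⬝ᵥ (A *ᵥ η) = η ⬝ᵥ (A *ᵥ ξ) := by
  conv_lhs => rw [← hA]
  rw [dotProduct_mulVec, vecMul_transpose, dotProduct_comm]

lemma qf_smul (A : Matrix d d ℝ) (c : ℝ) (ξ : d → ℝ) :
    qf A (c • ξ) = c^2 * qf A ξ := by
  simp [qf, mulVec_smul, smul_dotProduct, dotProduct_smul, smul_eq_mul]
  ring

lemma qf_add {A : Matrix d d ℝ} (hA : Aᵀ = A) (ξ η : d → ℝ) :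
    qf A (ξ + η) = qf A ξ + 2 * (ξ ⬝ᵥ (A *ᵥ η)) + qf A η := by
  simp only [qf, mulVec_add, dotProduct_add, add_dotProduct]
  rw [bilin_symm hA η ξ]
  ring

lemma qf_sub {A : Matrix d d ℝ} (hA : Aᵀ = A) (ξ η : d → ℝ) :
    qf A (ξ - η) = qf A ξ - 2 * (ξ ⬝ᵥ (A *ᵥ η)) + qf A η := by
  simp only [qf, mulVec_sub, dotProduct_sub, sub_dotProduct]
  rw [bilin_symm hA η ξ]
  ring

lemma qf_zero (A : Matrix d d ℝ) : qf A 0 = 0 := by simp [qf]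

lemma qf_neg (A : Matrix d d ℝ) (ξ : d → ℝ) : qf (-A) ξ = - qf A ξ := by
  simp [qf, neg_mulVec]

lemma continuous_qf (A : Matrix d d ℝ) : Continuous (qf A) := by
  unfold qf dotProduct mulVec
  refine continuous_finset_sum _ fun i _ => ?_
  exact (continuous_apply i).mul (continuous_finset_sum _ fun j _ =>
    continuous_const.mul (continuous_apply j))

/-- Cauchy–Schwarz for a psd quadratic form. -/
lemma qf_cauchy_schwarz {A : Matrix d d ℝ} (hA : Aᵀ = A) (hpsd : ∀ ξ, 0 ≤ qf A ξ)
    (ξ η : d → ℝ) : (ξ ⬝ᵥ (A *ᵥ η))^2 ≤ qf A ξ * qf A η := by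
  have h : ∀ t : ℝ, 0 ≤ qf A η * (t*t) + (2 * (ξ ⬝ᵥ (A *ᵥ η))) * t + qf A ξ := by
    intro t
    have := hpsd (ξ + t • η)
    rw [qf_add hA] at this
    simp only [mulVec_smul, dotProduct_smul, smul_eq_mul, qf_smul] at this
    nlinarith [this]
  have := discrim_le_zero h
  rw [discrim] at this
  nlinarith [this]

/-- a psd quadratic form that vanishes at ξ has ξ in the kernel -/
lemma qf_eq_zero_kernel {A : Matrix d d ℝ} (hA : Aᵀ = A) (hpsd : ∀ ξ, 0 ≤ qf A ξ)
    {ξ : d → ℝ} (h0 : qf A ξ = 0) : A *ᵥ ξ = 0 := by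
  have key : ∀ η, η ⬝ᵥ (A *ᵥ ξ) = 0 := by
    intro η
    have := qf_cauchy_schwarz hA hpsd η ξ
    rw [h0, mul_zero] at this
    nlinarith [sq_nonneg (η ⬝ᵥ (A *ᵥ ξ))]
  have := key (A *ᵥ ξ)
  exact dotProduct_self_eq_zero.mp this



/-- root existence for the Dines argument -/
lemma dines_root_aux (p q : ℝ) (hpq : |q| ≤ |p|) :
    ∃ s t : ℝ, s^2 + 2*(s*t)*p = 1 ∧ t^2 + 2*(s*t)*q = 1 := by
  by_cases hp : p = 0
  · have hq : q = 0 := by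
      rw [hp] at hpq; simpa using abs_nonpos_iff.mp (by simpa using hpq)
    exact ⟨1, 1, by rw [hp]; ring, by rw [hq]; ring⟩
  · set e : ℝ := 1/(2*p) with he
    have hpe : 2*p*e = 1 := by rw [he]; field_simp
    have hene : e ≠ 0 := by
      intro hc; rw [hc] at hpe; norm_num at hpe
    set g : ℝ → ℝ := fun z => (1-2*p*z)*(1-2*q*z) - z^2 with hg
    have hcont : ContinuousOn g (Set.uIcc 0 e) := by fun_prop
    have hge : g e = -e^2 := by
      have h1 : 1 - 2*p*e = 0 := by linarith
      simp only [hg]; rw [h1]; ring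
    have h0m : (0:ℝ) ∈ Set.uIcc (g 0) (g e) := by
      rw [Set.mem_uIcc]
      have hg0 : g 0 = 1 := by simp [hg]
      have h2 : -e^2 ≤ 0 := by nlinarith [sq_nonneg e]
      rw [hg0, hge]
      right; exact ⟨h2, by norm_num⟩
    obtain ⟨z, hz, hgz⟩ := intermediate_value_uIcc hcont h0m
    have hzb : |z| ≤ |e| := by
      rcases Set.mem_uIcc.mp hz with ⟨h1, h2⟩ | ⟨h1, h2⟩
      · rw [abs_of_nonneg h1, abs_of_nonneg (le_trans h1 h2)]; exact h2
      · rw [abs_of_nonpos h2, abs_of_nonpos (le_trans h1 h2)]; linarith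
    have h1p : 0 ≤ 1 - 2*p*z := by
      rcases Set.mem_uIcc.mp hz with ⟨h1, h2⟩ | ⟨h1, h2⟩
      · have hee : 0 < e := lt_of_le_of_ne (le_trans h1 h2) (Ne.symm hene)
        have hpp : 0 < p := by nlinarith
        nlinarith
      · have hee : e < 0 := lt_of_le_of_ne (le_trans h1 h2) hene
        have hpp : p < 0 := by nlinarith
        nlinarith
    have h1q : 0 ≤ 1 - 2*q*z := by
      have habs : |2*q*z| ≤ 1 := by
        have h1 : |2*q*z| = |2*q| * |z| := by rw [← abs_mul]
        have h2 : |2*q| * |z| ≤ |2*p| * |e| := by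
          apply mul_le_mul _ hzb (abs_nonneg _) (abs_nonneg _)
          rw [abs_mul, abs_mul]; exact mul_le_mul_of_nonneg_left hpq (abs_nonneg 2)
        have h3 : |2*p| * |e| = 1 := by
          rw [← abs_mul, abs_of_nonneg (by linarith : (0:ℝ) ≤ 2*p*e)]; exact hpe
        linarith
      linarith [(abs_le.mp habs).2]
    set s := Real.sqrt (1-2*p*z) with hs
    set t0 := Real.sqrt (1-2*q*z) with ht0
    set t := (if 0 ≤ z then t0 else -t0) with ht
    have hs2 : s^2 = 1-2*p*z := Real.sq_sqrt h1p
    have ht02 : t0^2 = 1-2*q*z := Real.sq_sqrt h1q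
    have ht2 : t^2 = 1-2*q*z := by
      by_cases hzz : 0 ≤ z
      · rw [ht, if_pos hzz]; exact ht02
      · rw [ht, if_neg hzz, neg_sq]; exact ht02
    have hmul : s * t0 = |z| := by
      rw [hs, ht0, ← Real.sqrt_mul h1p]
      have hzz : (1-2*p*z)*(1-2*q*z) = z^2 := by
        have : g z = 0 := hgz
        simp only [hg] at this; linarith
      rw [hzz, Real.sqrt_sq_eq_abs]
    have hst : s * t = z := by
      by_cases hzz : 0 ≤ z
      · rw [ht, if_pos hzz, hmul, abs_of_nonneg hzz]
      · rw [ht, if_neg hzz, mul_neg, hmul, abs_of_neg (not_le.mp hzz), neg_neg]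
    exact ⟨s, t, by rw [hst, hs2]; ring, by rw [hst, ht2]; ring⟩


lemma dines_root (p q : ℝ) :
    ∃ s t : ℝ, s^2 + 2*(s*t)*p = 1 ∧ t^2 + 2*(s*t)*q = 1 := by
  rcases le_total |q| |p| with h | h
  · exact dines_root_aux p q h
  · obtain ⟨s, t, h1, h2⟩ := dines_root_aux q p h
    refine ⟨t, s, ?_, ?_⟩
    · rw [mul_comm t s]; exact h2
    · rw [mul_comm t s]; exact h1


/-- the real-arithmetic core of Dines' theorem -/
lemma dines_real (u₁ u₂ v₁ v₂ b₁ b₂ : ℝ) :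
    (∃ s t : ℝ, s^2*u₁ + 2*(s*t)*b₁ + t^2*v₁ = u₁+v₁ ∧ s^2*u₂ + 2*(s*t)*b₂ + t^2*v₂ = u₂+v₂)
    ∨ (∃ c : ℝ, 0 ≤ c ∧ c*u₁ = u₁+v₁ ∧ c*u₂ = u₂+v₂)
    ∨ (∃ c : ℝ, 0 ≤ c ∧ c*v₁ = u₁+v₁ ∧ c*v₂ = u₂+v₂) := by
  by_cases hdet : u₁*v₂ - u₂*v₁ = 0
  · by_cases hu : u₁ = 0 ∧ u₂ = 0
    · exact Or.inr (Or.inr ⟨1, by norm_num, by rw [hu.1]; ring, by rw [hu.2]; ring⟩)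
    · have husq : 0 < u₁^2 + u₂^2 := by
        rcases not_and_or.mp hu with h | h <;> positivity
      set c := (u₁*v₁ + u₂*v₂)/(u₁^2+u₂^2) with hc
      have hv1 : v₁ = c*u₁ := by
        rw [hc]; field_simp; linear_combination (-u₂) * hdet
      have hv2 : v₂ = c*u₂ := by
        rw [hc]; field_simp; linear_combination u₁ * hdet
      by_cases hc1 : 0 ≤ 1 + c
      · exact Or.inr (Or.inl ⟨1+c, hc1, by rw [hv1]; ring, by rw [hv2]; ring⟩)
      · have hcneg : c < 0 := by linarith
        have hcne : c ≠ 0 := ne_of_lt hcneg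
        have hpos : 0 ≤ (1+c)/c := by
          rw [div_nonneg_iff]; right; constructor <;> linarith
        refine Or.inr (Or.inr ⟨(1+c)/c, hpos, ?_, ?_⟩)
        · rw [hv1]; field_simp
        · rw [hv2]; field_simp
  · left
    set dt := u₁*v₂ - u₂*v₁ with hdt
    set p := (b₁*v₂ - b₂*v₁)/dt with hp
    set q := (u₁*b₂ - u₂*b₁)/dt with hq
    have hbu : b₁ = p*u₁ + q*v₁ := by
      rw [hp, hq]; field_simp; ring
    have hbv : b₂ = p*u₂ + q*v₂ := by
      rw [hp, hq]; field_simp; ring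
    obtain ⟨s, t, h1, h2⟩ := dines_root p q
    refine ⟨s, t, ?_, ?_⟩
    · rw [hbu]; linear_combination u₁ * h1 + v₁ * h2
    · rw [hbv]; linear_combination u₂ * h1 + v₂ * h2

variable {d : Type*} [Fintype d]

def dinesSet (A B : Matrix d d ℝ) : Set (ℝ × ℝ) :=
  {x | ∃ ξ : d → ℝ, x = (qf A ξ, qf B ξ)}

lemma dinesSet_zero (A B : Matrix d d ℝ) : (0 : ℝ×ℝ) ∈ dinesSet A B :=
  ⟨0, by simp [qf_zero, Prod.ext_iff]⟩

lemma dinesSet_smul {A B : Matrix d d ℝ} {x : ℝ×ℝ} (hx : x ∈ dinesSet A B)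
    {c : ℝ} (hc : 0 ≤ c) : c • x ∈ dinesSet A B := by
  obtain ⟨ξ, rfl⟩ := hx
  refine ⟨Real.sqrt c • ξ, ?_⟩
  simp [Prod.ext_iff, qf_smul, Real.sq_sqrt hc, smul_eq_mul]

lemma smul_bilin (A : Matrix d d ℝ) (s t : ℝ) (ξ η : d → ℝ) :
    (s • ξ) ⬝ᵥ (A *ᵥ (t • η)) = (s*t) * (ξ ⬝ᵥ (A *ᵥ η)) := by
  simp [mulVec_smul, smul_dotProduct, dotProduct_smul, smul_eq_mul]; ring

lemma qf_combo {A : Matrix d d ℝ} (hA : Aᵀ = A) (s t : ℝ) (ξ η : d → ℝ) :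
    qf A (s • ξ + t • η) = s^2 * qf A ξ + 2*(s*t)*(ξ ⬝ᵥ (A *ᵥ η)) + t^2 * qf A η := by
  rw [qf_add hA, qf_smul, qf_smul, smul_bilin]; ring

lemma dinesSet_add {A B : Matrix d d ℝ} (hA : Aᵀ = A) (hB : Bᵀ = B)
    {x y : ℝ×ℝ} (hx : x ∈ dinesSet A B) (hy : y ∈ dinesSet A B) :
    x + y ∈ dinesSet A B := by
  obtain ⟨ξ, rfl⟩ := hx
  obtain ⟨η, rfl⟩ := hy
  rw [Prod.mk_add_mk]
  rcases dines_real (qf A ξ) (qf B ξ) (qf A η) (qf B η) (ξ ⬝ᵥ (A *ᵥ η)) (ξ ⬝ᵥ (B *ᵥ η)) with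
    ⟨s, t, h1, h2⟩ | ⟨c, hc, h1, h2⟩ | ⟨c, hc, h1, h2⟩
  · refine ⟨s • ξ + t • η, ?_⟩
    rw [Prod.mk.injEq, qf_combo hA, qf_combo hB]
    exact ⟨h1.symm, h2.symm⟩
  · have heq : (qf A ξ + qf A η, qf B ξ + qf B η) = c • ((qf A ξ, qf B ξ) : ℝ×ℝ) := by
      simp only [Prod.smul_mk, smul_eq_mul, Prod.mk.injEq]
      exact ⟨h1.symm, h2.symm⟩
    rw [heq]
    exact dinesSet_smul ⟨ξ, rfl⟩ hc
  · have heq : (qf A ξ + qf A η, qf B ξ + qf B η) = c • ((qf A η, qf B η) : ℝ×ℝ) := by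
      simp only [Prod.smul_mk, smul_eq_mul, Prod.mk.injEq]
      exact ⟨h1.symm, h2.symm⟩
    rw [heq]
    exact dinesSet_smul ⟨η, rfl⟩ hc

lemma dinesSet_convex {A B : Matrix d d ℝ} (hA : Aᵀ = A) (hB : Bᵀ = B) :
    Convex ℝ (dinesSet A B) := by
  intro x hx y hy a b ha hb hab
  exact dinesSet_add hA hB (dinesSet_smul hx ha) (dinesSet_smul hy hb)


lemma dotProduct_self_nonneg' (ξ : d → ℝ) : 0 ≤ ξ ⬝ᵥ ξ :=
  Finset.sum_nonneg fun i _ => mul_self_nonneg _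

lemma dotProduct_self_pos' {ξ : d → ℝ} (hξ : ξ ≠ 0) : 0 < ξ ⬝ᵥ ξ :=
  lt_of_le_of_ne (dotProduct_self_nonneg' ξ)
    (fun h => hξ (dotProduct_self_eq_zero.mp h.symm))

lemma exists_normalizer {ξ : d → ℝ} (hξ : ξ ≠ 0) :
    ∃ c : ℝ, 0 < c ∧ c^2 * (ξ ⬝ᵥ ξ) = 1 := by
  have hpos := dotProduct_self_pos' hξ
  refine ⟨(Real.sqrt (ξ ⬝ᵥ ξ))⁻¹, by positivity, ?_⟩
  rw [inv_pow, Real.sq_sqrt (le_of_lt hpos)]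
  exact inv_mul_cancel₀ (ne_of_gt hpos)

lemma continuous_dot_self : Continuous (fun ξ : d → ℝ => ξ ⬝ᵥ ξ) := by
  unfold dotProduct
  exact continuous_finset_sum _ fun i _ => (continuous_apply i).mul (continuous_apply i)

/-- S-procedure via separating hyperplane (non-strict core). -/
lemma slemma_core {A B : Matrix d d ℝ} (hA : Aᵀ = A) (hB : Bᵀ = B)
    (h : ∀ ξ : d → ℝ, ξ ≠ 0 → 0 ≤ qf A ξ → 0 < qf B ξ) :
    (∀ ξ, qf A ξ ≤ 0) ∨ ∃ α : ℝ, 0 ≤ α ∧ ∀ ξ, α * qf A ξ ≤ qf B ξ := by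
  set S := dinesSet A B with hS
  set Q : Set (ℝ×ℝ) := {x | 0 < x.1 ∧ x.2 < 0} with hQdef
  have hQconv : Convex ℝ Q := by
    have h1 : Convex ℝ {x : ℝ×ℝ | 0 < x.1} :=
      convex_halfSpace_gt ⟨fun a b => rfl, fun c a => rfl⟩ 0
    have h2 : Convex ℝ {x : ℝ×ℝ | x.2 < 0} :=
      convex_halfSpace_lt ⟨fun a b => rfl, fun c a => rfl⟩ 0
    exact h1.inter h2
  have hQopen : IsOpen Q :=
    (isOpen_lt continuous_const continuous_fst).inter
      (isOpen_lt continuous_snd continuous_const)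
  have hdisj : Disjoint Q S := by
    rw [Set.disjoint_left]
    rintro p hp ⟨ξ, rfl⟩
    have hξ : ξ ≠ 0 := by
      intro h0; rw [h0, qf_zero] at hp; exact lt_irrefl 0 hp.1
    exact absurd (h ξ hξ (le_of_lt hp.1)) (not_lt.mpr (le_of_lt hp.2))
  obtain ⟨f, u, hfQ, hfS⟩ :=
    geometric_hahn_banach_open hQconv hQopen (dinesSet_convex hA hB) hdisj
  have hu0 : u ≤ 0 := by simpa using hfS 0 (dinesSet_zero A B)
  have hfS0 : ∀ p ∈ S, 0 ≤ f p := by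
    intro p hp
    by_contra hcon
    push_neg at hcon
    set t : ℝ := (|u|+1)/(-f p) with ht
    have htpos : 0 < t := div_pos (by positivity) (by linarith)
    have hmem := dinesSet_smul hp (le_of_lt htpos)
    have h2 := hfS _ hmem
    rw [_root_.map_smul, smul_eq_mul] at h2
    have hne : f p ≠ 0 := ne_of_lt hcon
    have h3 : t * f p = -(|u|+1) := by
      rw [ht]; field_simp [hne]; try ring
    rw [h3] at h2
    linarith [neg_abs_le u]
  set a := f (1,0) with hadef
  set b := f (0,1) with hbdef
  have hf_eval : ∀ p : ℝ×ℝ, f p = p.1 * a + p.2 * b := by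
    intro p
    have hp : p = p.1 • ((1,0) : ℝ×ℝ) + p.2 • ((0,1) : ℝ×ℝ) := by
      simp [Prod.ext_iff]
    conv_lhs => rw [hp]
    rw [map_add, _root_.map_smul, _root_.map_smul, smul_eq_mul, smul_eq_mul]
  have hfnz : ¬(a = 0 ∧ b = 0) := by
    rintro ⟨ha0, hb0⟩
    have h1 := hfQ (1, -1) (by constructor <;> norm_num)
    rw [hf_eval, ha0, hb0] at h1
    simp at h1
    linarith
  have ha : a ≤ 0 := by
    by_contra hcon
    push_neg at hcon
    set ε : ℝ := a/(2*(|b|+1)) with hε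
    have hεpos : 0 < ε := by rw [hε]; positivity
    have h1 := hfQ (1, -ε) ⟨by norm_num, by simpa using hεpos⟩
    rw [hf_eval] at h1
    simp only at h1
    have h2 : ε * b ≤ ε * |b| := mul_le_mul_of_nonneg_left (le_abs_self b) (le_of_lt hεpos)
    have h3 : ε * (|b|+1) = a/2 := by rw [hε]; field_simp
    nlinarith [abs_nonneg b]
  have hb : 0 ≤ b := by
    by_contra hcon
    push_neg at hcon
    by_cases ha0 : a = 0
    · have h1 := hfQ (1, -1) (by constructor <;> norm_num)
      rw [hf_eval, ha0] at h1
      simp at h1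
      linarith
    · have haneg : a < 0 := lt_of_le_of_ne ha ha0
      set ε : ℝ := b/a with hε
      have hεpos : 0 < ε := by rw [hε]; exact div_pos_of_neg_of_neg hcon haneg
      have h1 := hfQ (ε, -1) ⟨hεpos, by norm_num⟩
      rw [hf_eval] at h1
      simp only at h1
      have h2 : ε * a = b := by rw [hε]; field_simp
      nlinarith
  by_cases hb0 : b = 0
  · left
    have haneg : a < 0 := lt_of_le_of_ne ha (fun hc => hfnz ⟨hc, hb0⟩)
    intro ξ
    have h1 := hfS0 _ ⟨ξ, rfl⟩
    rw [hf_eval] at h1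
    simp only [hb0, mul_zero, add_zero] at h1
    nlinarith
  · right
    have hbpos : 0 < b := lt_of_le_of_ne hb (Ne.symm hb0)
    refine ⟨-a/b, div_nonneg (neg_nonneg.mpr ha) hb, fun ξ => ?_⟩
    have h1 := hfS0 _ ⟨ξ, rfl⟩
    rw [hf_eval] at h1
    simp only at h1
    rw [div_mul_eq_mul_div, div_le_iff₀ hbpos]
    nlinarith

/-- if M is positive on the kernel of a psd form A, then M + kA is eventually positive
definite -/
lemma grow_lemma {A M : Matrix d d ℝ} (hAt : Aᵀ = A) (hA : ∀ ξ, 0 ≤ qf A ξ)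
    (h : ∀ ξ : d → ℝ, ξ ≠ 0 → A *ᵥ ξ = 0 → 0 < qf M ξ) :
    ∃ k : ℕ, ∀ ξ, ξ ≠ 0 → 0 < qf M ξ + k * qf A ξ := by
  by_contra hcon
  push_neg at hcon
  choose ξs hξne hξle using hcon
  set η : ℕ → (d → ℝ) := fun k => (‖ξs k‖)⁻¹ • ξs k with hη
  have hηs : ∀ k, η k ∈ Metric.sphere (0 : d → ℝ) 1 := by
    intro k
    rw [Metric.mem_sphere, dist_zero_right]
    exact norm_smul_inv_norm (hξne k)
  have hscale : ∀ k : ℕ, qf M (η k) + k * qf A (η k) ≤ 0 := by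
    intro k
    have hns : (0:ℝ) ≤ (‖ξs k‖⁻¹)^2 := sq_nonneg _
    rw [hη]
    simp only
    rw [qf_smul, qf_smul]
    nlinarith [hξle k]
  obtain ⟨ηl, hmem, φ, hφ, htend⟩ := (isCompact_sphere (0 : d → ℝ) 1).tendsto_subseq hηs
  have hηlne : ηl ≠ 0 := by
    rw [Metric.mem_sphere, dist_zero_right] at hmem
    intro hc; rw [hc, norm_zero] at hmem; norm_num at hmem
  have htendM : Filter.Tendsto (fun k => qf M (η (φ k))) Filter.atTop (nhds (qf M ηl)) :=
    ((continuous_qf M).tendsto ηl).comp htend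
  have htendA : Filter.Tendsto (fun k => qf A (η (φ k))) Filter.atTop (nhds (qf A ηl)) :=
    ((continuous_qf A).tendsto ηl).comp htend
  set C : ℝ := |qf M ηl| + 1 with hC
  have hMlb : ∀ᶠ k in Filter.atTop, qf M ηl - 1 < qf M (η (φ k)) :=
    htendM.eventually (eventually_gt_nhds (by linarith))
  have hev : ∀ᶠ k in Filter.atTop, qf A (η (φ k)) ≤ C * ((φ k : ℝ))⁻¹ := by
    filter_upwards [hMlb, Filter.eventually_ge_atTop 1] with k h1 h2
    have hφk : (1:ℝ) ≤ (φ k : ℝ) := by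
      have hk1 : k ≤ φ k := hφ.le_apply
      exact_mod_cast le_trans h2 hk1
    have hφpos : (0:ℝ) < (φ k : ℝ) := by linarith
    have h3 : qf A (η (φ k)) * (φ k : ℝ) ≤ C := by
      have h4 := hscale (φ k)
      have h5 : -qf M (η (φ k)) ≤ C := by
        rw [hC]
        have := neg_abs_le (qf M ηl)
        linarith
      nlinarith
    calc qf A (η (φ k)) = qf A (η (φ k)) * (φ k : ℝ) * (φ k : ℝ)⁻¹ := by field_simp
    _ ≤ C * (φ k : ℝ)⁻¹ := mul_le_mul_of_nonneg_right h3 (by positivity)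
  have htendC : Filter.Tendsto (fun k => C * ((φ k : ℝ))⁻¹) Filter.atTop (nhds 0) := by
    have h1 : Filter.Tendsto (fun k => ((φ k : ℝ))) Filter.atTop Filter.atTop :=
      tendsto_natCast_atTop_atTop.comp hφ.tendsto_atTop
    have h2 := h1.inv_tendsto_atTop
    simpa using h2.const_mul C
  have hA0 : qf A ηl = 0 :=
    le_antisymm (le_of_tendsto_of_tendsto htendA htendC hev) (hA ηl)
  have hker : A *ᵥ ηl = 0 := qf_eq_zero_kernel hAt hA hA0
  have hpos := h ηl hηlne hker
  have hle : qf M ηl ≤ 0 := by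
    apply le_of_tendsto' htendM
    intro k
    have h1 := hscale (φ k)
    have h2 := hA (η (φ k))
    nlinarith
  linarith

/-- Either A is everywhere nonpositive outside 0, or the strict condition yields a
uniform gap. -/
lemma min_pos {A M : Matrix d d ℝ}
    (h : ∀ ξ : d → ℝ, ξ ≠ 0 → 0 ≤ qf A ξ → 0 < qf M ξ) :
    (∀ ξ, ξ ≠ 0 → qf A ξ < 0) ∨
      ∃ δ : ℝ, 0 < δ ∧ ∀ ξ, 0 ≤ qf A ξ → δ * (ξ ⬝ᵥ ξ) ≤ qf M ξ := by
  set K : Set (d → ℝ) := {ξ | ξ ⬝ᵥ ξ = 1 ∧ 0 ≤ qf A ξ} with hK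
  rcases K.eq_empty_or_nonempty with hKe | hKne
  · left
    intro ξ hξ
    by_contra hcon
    push_neg at hcon
    obtain ⟨c, hc, hcn⟩ := exists_normalizer hξ
    have : c • ξ ∈ K := by
      constructor
      · have : (c • ξ) ⬝ᵥ (c • ξ) = c^2 * (ξ ⬝ᵥ ξ) := by
          simp [smul_dotProduct, dotProduct_smul, smul_eq_mul]; ring
        rw [this]; exact hcn
      · rw [qf_smul]; positivity
    rw [hKe] at this
    exact this
  · right
    have hclosed : IsClosed K := by
      rw [hK]
      exact (isClosed_eq continuous_dot_self continuous_const).inter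
        (isClosed_le continuous_const (continuous_qf A))
    have hsub : K ⊆ Metric.closedBall (0 : d → ℝ) 1 := by
      intro ξ hξ
      rw [Metric.mem_closedBall, dist_zero_right]
      rw [pi_norm_le_iff_of_nonneg (by norm_num)]
      intro i
      rw [Real.norm_eq_abs, abs_le_one_iff_mul_self_le_one]
      calc ξ i * ξ i ≤ ∑ j, ξ j * ξ j :=
            Finset.single_le_sum (fun j _ => mul_self_nonneg (ξ j)) (Finset.mem_univ i)
      _ = 1 := hξ.1
    have hcomp : IsCompact K :=
      (isCompact_closedBall (0 : d → ℝ) 1).of_isClosed_subset hclosed hsub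
    obtain ⟨ξ₀, hξ₀K, hmin'⟩ := hcomp.exists_isMinOn hKne (continuous_qf M).continuousOn
    have hmin : ∀ ζ ∈ K, qf M ξ₀ ≤ qf M ζ := fun ζ hζ => hmin' hζ
    have hξ₀ne : ξ₀ ≠ 0 := by
      intro hc
      have := hξ₀K.1
      rw [hc] at this
      simp at this
    refine ⟨qf M ξ₀, h ξ₀ hξ₀ne hξ₀K.2, fun ξ hAξ => ?_⟩
    by_cases hξ : ξ = 0
    · rw [hξ]; simp [qf_zero]
    · obtain ⟨c, hc, hcn⟩ := exists_normalizer hξ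
      have hmemK : c • ξ ∈ K := by
        constructor
        · have : (c • ξ) ⬝ᵥ (c • ξ) = c^2 * (ξ ⬝ᵥ ξ) := by
            simp [smul_dotProduct, dotProduct_smul, smul_eq_mul]; ring
          rw [this]; exact hcn
        · rw [qf_smul]; positivity
      have h1 := hmin _ hmemK
      rw [qf_smul] at h1
      have h2 := dotProduct_self_pos' hξ
      have hc2 : c^2 = (ξ ⬝ᵥ ξ)⁻¹ := by
        field_simp at hcn ⊢
        linarith
      rw [hc2] at h1
      rw [← sub_nonneg]
      have h3 : 0 ≤ (ξ ⬝ᵥ ξ)⁻¹ * qf M ξ - qf M ξ₀ := by linarith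
      have h4 := mul_nonneg (le_of_lt h2) h3
      calc (0:ℝ) ≤ (ξ ⬝ᵥ ξ) * ((ξ ⬝ᵥ ξ)⁻¹ * qf M ξ - qf M ξ₀) := h4
      _ = qf M ξ - qf M ξ₀ * (ξ ⬝ᵥ ξ) := by field_simp


lemma qf_sub_smul_one [DecidableEq d] (B : Matrix d d ℝ) (c : ℝ) (ξ : d → ℝ) :
    qf (B - c • (1 : Matrix d d ℝ)) ξ = qf B ξ - c * (ξ ⬝ᵥ ξ) := by
  simp [qf, sub_mulVec, smul_mulVec, one_mulVec, dotProduct_sub,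
    dotProduct_smul, smul_eq_mul]

lemma grow_branch {A B : Matrix d d ℝ} (hA : Aᵀ = A)
    (h : ∀ ξ : d → ℝ, ξ ≠ 0 → 0 ≤ qf A ξ → 0 < qf B ξ)
    (hneg : ∀ ξ, qf A ξ ≤ 0) :
    ∃ α : ℝ, 0 ≤ α ∧ ∀ ξ, ξ ≠ 0 → α * qf A ξ < qf B ξ := by
  have hApsd : ∀ ξ, 0 ≤ qf (-A) ξ := fun ξ => by rw [qf_neg]; linarith [hneg ξ]
  have hAt : (-A)ᵀ = -A := by rw [transpose_neg, hA]
  have hker : ∀ ξ : d → ℝ, ξ ≠ 0 → (-A) *ᵥ ξ = 0 → 0 < qf B ξ := by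
    intro ξ hξ hk
    have hk' : A *ᵥ ξ = 0 := by rwa [neg_mulVec, neg_eq_zero] at hk
    exact h ξ hξ (by rw [qf, hk']; simp)
  obtain ⟨k, hk⟩ := grow_lemma hAt hApsd hker
  refine ⟨k, Nat.cast_nonneg k, fun ξ hξ => ?_⟩
  have h1 := hk ξ hξ
  rw [qf_neg] at h1
  linarith

/-- strict S-lemma at the level of quadratic forms -/
lemma strict_slemma [DecidableEq d] {A B : Matrix d d ℝ} (hA : Aᵀ = A) (hB : Bᵀ = B)
    (h : ∀ ξ : d → ℝ, ξ ≠ 0 → 0 ≤ qf A ξ → 0 < qf B ξ) :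
    ∃ α : ℝ, 0 ≤ α ∧ ∀ ξ, ξ ≠ 0 → α * qf A ξ < qf B ξ := by
  rcases min_pos h with hneg | ⟨δ, hδ, hmin⟩
  · refine grow_branch hA h (fun ξ => ?_)
    by_cases hξ : ξ = 0
    · rw [hξ, qf_zero]
    · linarith [hneg ξ hξ]
  · set B' := B - (δ/2) • (1 : Matrix d d ℝ) with hB'
    have hB's : B'ᵀ = B' := by rw [hB', transpose_sub, transpose_smul, transpose_one, hB]
    have hq : ∀ ξ, qf B' ξ = qf B ξ - (δ/2) * (ξ ⬝ᵥ ξ) := qf_sub_smul_one B (δ/2)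
    have h' : ∀ ξ : d → ℝ, ξ ≠ 0 → 0 ≤ qf A ξ → 0 < qf B' ξ := by
      intro ξ hξ hA0
      rw [hq]
      have h1 := hmin ξ hA0
      have h2 := dotProduct_self_pos' hξ
      nlinarith
    rcases slemma_core hA hB's h' with hneg | ⟨α, hα, hineq⟩
    · exact grow_branch hA h hneg
    · refine ⟨α, hα, fun ξ hξ => ?_⟩
      have h1 := hineq ξ
      rw [hq] at h1
      have h2 := dotProduct_self_pos' hξ
      nlinarith


lemma conj_quad {e : Type*} [Fintype e] (A : Matrix d d ℝ) (Bm : Matrix d e ℝ) (x : e → ℝ) :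
    x ⬝ᵥ ((Bmᵀ * A * Bm) *ᵥ x) = qf A (Bm *ᵥ x) := by
  rw [qf, ← mulVec_mulVec, ← mulVec_mulVec, dotProduct_mulVec x Bmᵀ, vecMul_transpose]

lemma conj_symm {e : Type*} [Fintype e] {A : Matrix d d ℝ} (hA : Aᵀ = A)
    (Bm : Matrix d e ℝ) : (Bmᵀ * A * Bm)ᵀ = Bmᵀ * A * Bm := by
  rw [transpose_mul, transpose_mul, transpose_transpose, hA, Matrix.mul_assoc]

lemma isHermitian_of_symm {A : Matrix d d ℝ} (h : Aᵀ = A) : A.IsHermitian := by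
  rw [Matrix.IsHermitian, conjTranspose_eq_transpose_of_trivial]; exact h

lemma vecMulVec_mulVec {e : Type*} [Fintype e] (w : d → ℝ) (v u : e → ℝ) :
    vecMulVec w v *ᵥ u = (v ⬝ᵥ u) • w := by
  ext i
  simp only [mulVec, dotProduct, vecMulVec_apply, Pi.smul_apply, smul_eq_mul]
  rw [Finset.sum_mul]
  exact Finset.sum_congr rfl fun j _ => by ring

lemma sum_elim_ne_zero {a b : Type*} {x : a → ℝ} {y : b → ℝ} (hx : x ≠ 0) :
    Sum.elim x y ≠ 0 :=
  fun h => hx (funext fun i => congrFun h (Sum.inl i))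

end SLaux

open SLaux

/-- Matrix S-lemma (Theorem 1 in the paper). -/
theorem matrix_S_lemma
    (n r : ℕ)
    (M : Matrix (Fin n ⊕ Fin r) (Fin n ⊕ Fin r) ℝ) (hM : M.IsSymm)
    (H11 : Matrix (Fin n) (Fin n) ℝ) (H12 : Matrix (Fin n) (Fin r) ℝ)
    (H22 : Matrix (Fin r) (Fin r) ℝ)
    (hH11 : H11.IsSymm) (hH22 : H22.IsSymm)
    (H : Matrix (Fin n ⊕ Fin r) (Fin n ⊕ Fin r) ℝ)
    (hH : H = fromBlocks H11 H12 H12ᵀ H22)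
    (hH22neg : (-H22).PosDef)
    (hne : ∃ Z : Matrix (Fin r) (Fin n) ℝ,
      ((fromRows (1 : Matrix (Fin n) (Fin n) ℝ) Z)ᵀ * H *
        fromRows 1 Z).PosSemidef) :
    (∀ Z : Matrix (Fin r) (Fin n) ℝ,
        ((fromRows (1 : Matrix (Fin n) (Fin n) ℝ) Z)ᵀ * H *
          fromRows 1 Z).PosSemidef →
        ((fromRows (1 : Matrix (Fin n) (Fin n) ℝ) Z)ᵀ * M *
          fromRows 1 Z).PosDef)
      ↔ ∃ α : ℝ, 0 ≤ α ∧ (M - α • H).PosDef := by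
  obtain ⟨Z₀, hZ₀⟩ := hne
  have hMt : Mᵀ = M := hM.eq
  have hHt : Hᵀ = H := by
    rw [hH, fromBlocks_transpose, transpose_transpose, hH11.eq, hH22.eq]
  set P : Matrix (Fin r) (Fin r) ℝ := -H22 with hPdef
  have hPD : P.PosDef := hH22neg
  have hPt : Pᵀ = P := by rw [hPdef, transpose_neg, hH22.eq]
  have hdet : IsUnit P.det := hPD.det_pos.ne'.isUnit
  set Zs : Matrix (Fin r) (Fin n) ℝ := P⁻¹ * H12ᵀ with hZsdef
  set G : Matrix (Fin n) (Fin n) ℝ := H11 + H12 * Zs with hGdef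
  have hPinvt : (P⁻¹)ᵀ = P⁻¹ := by rw [transpose_nonsing_inv, hPt]
  have hGt : Gᵀ = G := by
    rw [hGdef, transpose_add, hH11.eq, transpose_mul]
    congr 1
    rw [hZsdef, transpose_mul, transpose_transpose, hPinvt, Matrix.mul_assoc]
  have hPZs : ∀ v : Fin n → ℝ, P *ᵥ (Zs *ᵥ v) = H12ᵀ *ᵥ v := by
    intro v
    rw [mulVec_mulVec, hZsdef, ← Matrix.mul_assoc, mul_nonsing_inv _ hdet, Matrix.one_mul]
  have hswap : ∀ (x : Fin n → ℝ) (y : Fin r → ℝ),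
      y ⬝ᵥ (H12ᵀ *ᵥ x) = x ⬝ᵥ (H12 *ᵥ y) := by
    intro x y
    rw [dotProduct_mulVec, vecMul_transpose, dotProduct_comm]
  have hmvH : ∀ (x : Fin n → ℝ) (y : Fin r → ℝ),
      H *ᵥ Sum.elim x y = Sum.elim (H11 *ᵥ x + H12 *ᵥ y) (H12ᵀ *ᵥ x + H22 *ᵥ y) := by
    intro x y
    rw [hH, fromBlocks_mulVec]
    simp only [Sum.elim_comp_inl, Sum.elim_comp_inr]
  have hsplit : ∀ (x : Fin n → ℝ) (y : Fin r → ℝ),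
      qf H (Sum.elim x y) = qf G x - qf P (y - Zs *ᵥ x) := by
    intro x y
    have e1 : y ⬝ᵥ (P *ᵥ (Zs *ᵥ x)) = x ⬝ᵥ (H12 *ᵥ y) := by rw [hPZs, hswap]
    have e2 : qf P (Zs *ᵥ x) = x ⬝ᵥ ((H12 * Zs) *ᵥ x) := by
      rw [qf, hPZs, hswap x (Zs *ᵥ x), mulVec_mulVec]
    have e4 : qf P y = -(y ⬝ᵥ (H22 *ᵥ y)) := by
      rw [qf, hPdef, neg_mulVec, dotProduct_neg]
    have e5 : qf H (Sum.elim x y) =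
        x ⬝ᵥ (H11 *ᵥ x) + x ⬝ᵥ (H12 *ᵥ y) + (y ⬝ᵥ (H12ᵀ *ᵥ x) + y ⬝ᵥ (H22 *ᵥ y)) := by
      rw [qf, hmvH, sumElim_dotProduct_sumElim, dotProduct_add, dotProduct_add]
    have e6 : qf G x = x ⬝ᵥ (H11 *ᵥ x) + x ⬝ᵥ ((H12 * Zs) *ᵥ x) := by
      rw [qf, hGdef, add_mulVec, dotProduct_add]
    rw [e5, e6, qf_sub hPt, e1, e2, e4, hswap]
    ring
  have hPpsd : ∀ w : Fin r → ℝ, 0 ≤ qf P w := fun w => hPD.posSemidef.dotProduct_mulVec_nonneg w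
  have hPpos : ∀ w : Fin r → ℝ, w ≠ 0 → 0 < qf P w := fun w hw => hPD.dotProduct_mulVec_pos hw
  have hGpsd : ∀ u, 0 ≤ qf G u := by
    intro u
    have h1 : 0 ≤ u ⬝ᵥ (((fromRows (1 : Matrix (Fin n) (Fin n) ℝ) Z₀)ᵀ * H * fromRows 1 Z₀) *ᵥ u) := hZ₀.dotProduct_mulVec_nonneg u
    erw [conj_quad, fromRows_mulVec, one_mulVec, hsplit] at h1
    have h2 : 0 ≤ qf P (Z₀ *ᵥ u - Zs *ᵥ u) := hPpsd _
    linarith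
  have hpsd_of : ∀ Z : Matrix (Fin r) (Fin n) ℝ,
      (∀ u, 0 ≤ qf G u - qf P (Z *ᵥ u - Zs *ᵥ u)) →
      ((fromRows (1 : Matrix (Fin n) (Fin n) ℝ) Z)ᵀ * H * fromRows 1 Z).PosSemidef := by
    intro Z hZ
    refine PosSemidef.of_dotProduct_mulVec_nonneg (isHermitian_of_symm (conj_symm hHt _)) fun u => ?_
    have hst : star u = u := rfl
    erw [hst, conj_quad, fromRows_mulVec, one_mulVec, hsplit]
    exact hZ u
  -- the completion lemma
  have hcomp : ∀ (x : Fin n → ℝ) (y : Fin r → ℝ), x ≠ 0 → 0 ≤ qf H (Sum.elim x y) →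
      ∃ Z : Matrix (Fin r) (Fin n) ℝ,
        ((fromRows (1 : Matrix (Fin n) (Fin n) ℝ) Z)ᵀ * H * fromRows 1 Z).PosSemidef ∧
        Sum.elim x y = fromRows 1 Z *ᵥ x := by
    intro x y hx hq
    rw [hsplit] at hq
    have hq' : qf P (y - Zs *ᵥ x) ≤ qf G x := by linarith
    by_cases hGx : qf G x = 0
    · have hw0 : y - Zs *ᵥ x = 0 := by
        by_contra hw
        have := hPpos _ hw
        rw [hGx] at hq'
        linarith
      have hy : y = Zs *ᵥ x := by rwa [sub_eq_zero] at hw0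
      have hGxv : G *ᵥ x = 0 := qf_eq_zero_kernel hGt hGpsd hGx
      have hxx : x ⬝ᵥ x ≠ 0 := ne_of_gt (dotProduct_self_pos' hx)
      set Rm : Matrix (Fin n) (Fin n) ℝ := 1 - (x ⬝ᵥ x)⁻¹ • vecMulVec x x with hRm
      set Z : Matrix (Fin r) (Fin n) ℝ := Zs + (Z₀ - Zs) * Rm with hZdef
      have hRmx : Rm *ᵥ x = 0 := by
        rw [hRm, sub_mulVec, one_mulVec, smul_mulVec, SLaux.vecMulVec_mulVec,
          smul_smul, inv_mul_cancel₀ hxx, one_smul, sub_self]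
      have hZx : Z *ᵥ x = y := by
        rw [hZdef, add_mulVec, ← mulVec_mulVec x (Z₀ - Zs) Rm, hRmx, mulVec_zero, add_zero, hy]
      refine ⟨Z, hpsd_of Z ?_, by rw [fromRows_mulVec, one_mulVec, hZx]⟩
      intro u
      have hui : Z *ᵥ u - Zs *ᵥ u = (Z₀ - Zs) *ᵥ (Rm *ᵥ u) := by
        rw [hZdef, add_mulVec, ← mulVec_mulVec u (Z₀ - Zs) Rm, add_sub_cancel_left]
      have hux : Rm *ᵥ u = u - ((x ⬝ᵥ x)⁻¹ * (x ⬝ᵥ u)) • x := by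
        rw [hRm, sub_mulVec, one_mulVec, smul_mulVec, SLaux.vecMulVec_mulVec, smul_smul]
      have hGu' : qf G (Rm *ᵥ u) = qf G u := by
        rw [hux, qf_sub hGt, qf_smul, hGx, mulVec_smul, hGxv, smul_zero, dotProduct_zero]
        ring
      have h2 : qf P ((Z₀ - Zs) *ᵥ (Rm *ᵥ u)) ≤ qf G (Rm *ᵥ u) := by
        have h3 : 0 ≤ (Rm *ᵥ u) ⬝ᵥ (((fromRows (1 : Matrix (Fin n) (Fin n) ℝ) Z₀)ᵀ * H * fromRows 1 Z₀) *ᵥ (Rm *ᵥ u)) :=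
          hZ₀.dotProduct_mulVec_nonneg (Rm *ᵥ u)
        erw [conj_quad, fromRows_mulVec, one_mulVec, hsplit] at h3
        have h4 : Z₀ *ᵥ (Rm *ᵥ u) - Zs *ᵥ (Rm *ᵥ u) = (Z₀ - Zs) *ᵥ (Rm *ᵥ u) :=
          (sub_mulVec _ _ _).symm
        rw [h4] at h3
        linarith
      rw [hui]
      linarith
    · have hGxpos : 0 < qf G x := lt_of_le_of_ne (hGpsd x) (Ne.symm hGx)
      set w : Fin r → ℝ := y - Zs *ᵥ x with hw
      set Z : Matrix (Fin r) (Fin n) ℝ := Zs + (qf G x)⁻¹ • vecMulVec w (G *ᵥ x) with hZdef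
      have hGxd : (G *ᵥ x) ⬝ᵥ x = qf G x := by rw [dotProduct_comm]; rfl
      have hZx : Z *ᵥ x = y := by
        rw [hZdef, add_mulVec, smul_mulVec, SLaux.vecMulVec_mulVec, hGxd, smul_smul,
          inv_mul_cancel₀ hGx, one_smul, hw]
        abel
      refine ⟨Z, hpsd_of Z ?_, by rw [fromRows_mulVec, one_mulVec, hZx]⟩
      intro u
      have hZu : Z *ᵥ u - Zs *ᵥ u = ((qf G x)⁻¹ * ((G *ᵥ x) ⬝ᵥ u)) • w := by
        rw [hZdef, add_mulVec, add_sub_cancel_left, smul_mulVec, SLaux.vecMulVec_mulVec,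
          smul_smul]
      rw [hZu, qf_smul]
      have hβ : (G *ᵥ x) ⬝ᵥ u = x ⬝ᵥ (G *ᵥ u) := by
        rw [dotProduct_comm, bilin_symm hGt]
      have hCS : ((G *ᵥ x) ⬝ᵥ u)^2 ≤ qf G x * qf G u := by
        rw [hβ]; exact qf_cauchy_schwarz hGt hGpsd x u
      have hPw : qf P w ≤ qf G x := hq'
      have hPwpos : 0 ≤ qf P w := hPpsd w
      have h1 : ((qf G x)⁻¹ * ((G *ᵥ x) ⬝ᵥ u))^2 * qf P w ≤
          ((qf G x)⁻¹ * ((G *ᵥ x) ⬝ᵥ u))^2 * qf G x :=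
        mul_le_mul_of_nonneg_left hPw (sq_nonneg _)
      have h2 : ((qf G x)⁻¹ * ((G *ᵥ x) ⬝ᵥ u))^2 * qf G x = ((G *ᵥ x) ⬝ᵥ u)^2 / qf G x := by
        field_simp
      have h3 : ((G *ᵥ x) ⬝ᵥ u)^2 / qf G x ≤ qf G u := by
        rw [div_le_iff₀ hGxpos]
        nlinarith [hCS]
      linarith
  constructor
  · intro hyp
    have key : ∀ ξ : (Fin n ⊕ Fin r) → ℝ, ξ ≠ 0 → 0 ≤ qf H ξ → 0 < qf M ξ := by
      intro ξ hξ hq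
      set x : Fin n → ℝ := ξ ∘ Sum.inl with hxdef
      set y : Fin r → ℝ := ξ ∘ Sum.inr with hydef
      have hξeq : ξ = Sum.elim x y := by funext i; cases i <;> rfl
      by_cases hx : x = 0
      · exfalso
        have hy : y ≠ 0 := by
          intro hy
          apply hξ
          rw [hξeq, hx, hy]
          funext i; cases i <;> rfl
        rw [hξeq, hx, hsplit, mulVec_zero, sub_zero, qf_zero] at hq
        have := hPpos y hy
        linarith
      · obtain ⟨Z, hZpsd, heq⟩ := hcomp x y hx (by rwa [hξeq] at hq)
        have h1 := (hyp Z hZpsd).dotProduct_mulVec_pos hx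
        have hst : star x = x := rfl
        erw [hst, conj_quad] at h1
        rw [hξeq, heq]
        exact h1
    obtain ⟨α, hα, hstrict⟩ := strict_slemma hHt hMt key
    refine ⟨α, hα, PosDef.of_dotProduct_mulVec_pos (isHermitian_of_symm ?_) fun ξ hξ => ?_⟩
    · rw [transpose_sub, hMt, transpose_smul, hHt]
    · have h1 := hstrict ξ hξ
      have e1 : qf M ξ = ξ ⬝ᵥ (M *ᵥ ξ) := rfl
      have e2 : qf H ξ = ξ ⬝ᵥ (H *ᵥ ξ) := rfl
      rw [e1, e2] at h1
      have hst : star ξ = ξ := rfl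
      rw [hst, sub_mulVec, smul_mulVec, dotProduct_sub, dotProduct_smul, smul_eq_mul]
      linarith
  · rintro ⟨α, hα, hPDM⟩ Z hZ
    refine PosDef.of_dotProduct_mulVec_pos (isHermitian_of_symm (conj_symm hMt _)) fun x hx => ?_
    have hζne : Sum.elim x (Z *ᵥ x) ≠ 0 := sum_elim_ne_zero hx
    have hζeq : fromRows (1 : Matrix (Fin n) (Fin n) ℝ) Z *ᵥ x = Sum.elim x (Z *ᵥ x) := by
      rw [fromRows_mulVec, one_mulVec]
    have h1 := hPDM.dotProduct_mulVec_pos hζne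
    have hst1 : star (Sum.elim x (Z *ᵥ x)) = Sum.elim x (Z *ᵥ x) := rfl
    rw [hst1, sub_mulVec, smul_mulVec, dotProduct_sub, dotProduct_smul, smul_eq_mul] at h1
    have h2 := hZ.dotProduct_mulVec_nonneg x
    have hstx : star x = x := rfl
    erw [hstx, conj_quad, hζeq] at h2
    have e2 : qf H (Sum.elim x (Z *ᵥ x)) = Sum.elim x (Z *ᵥ x) ⬝ᵥ (H *ᵥ Sum.elim x (Z *ᵥ x)) := rfl
    rw [e2] at h2
    erw [hstx, conj_quad, hζeq]
    have e1 : qf M (Sum.elim x (Z *ᵥ x)) = Sum.elim x (Z *ᵥ x) ⬝ᵥ (M *ᵥ Sum.elim x (Z *ᵥ x)) := rfl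
    rw [e1]
    nlinarith [mul_nonneg hα h2]
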